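/- Let κ be an uncountable cardinal with κ = κ^{<κ} and T a subtree of κ^{<κ} × κ^{<κ}. If there is an ∃^x-superperfect embedding into T, then there is a κ-Miller tree S with [S] ⊆ p[T], and hence p[T] is not contained in any K_κ subset of κ^κ. -/

import Mathlib

open Cardinal Set Topology

universe u

/-- The bounded topology on `K → Y`: basic open sets are determined by an
initial segment of values. -/
def bTop (K : Type u) [LinearOrder K] (Y : Type u) : TopologicalSpace (K → Y) :=
  TopologicalSpace.generateFrom
    {U | ∃ (b : K) (s : K → Y), U = {x | ∀ i, i < b → x i = s i}}

/-- `A` is κ-compact: every open cover (for the bounded topology) has a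
subcover of size `< #K`. -/
def KCompact (K : Type u) [LinearOrder K] {Y : Type u} (A : Set (K → Y)) : Prop :=
  ∀ 𝒰 : Set (Set (K → Y)), (∀ U ∈ 𝒰, IsOpen[bTop K Y] U) → A ⊆ ⋃₀ 𝒰 →
    ∃ 𝒱 ⊆ 𝒰, #𝒱 < #K ∧ A ⊆ ⋃₀ 𝒱

/-- `B` is a `K_κ` subset: a union of κ-many κ-compact sets. -/
def IsKK (K : Type u) [LinearOrder K] (B : Set (K → K)) : Prop :=
  ∃ C : K → Set (K → K), (∀ b, KCompact K (C b)) ∧ B = ⋃ b, C b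

/-- Nodes of the tree `Y^{<K}`: sequences of length `b`, for `b : K`. -/
abbrev Nd (K : Type u) [LinearOrder K] (Y : Type u) := Σ b : K, (Set.Iio b → Y)

/-- Restriction of a node to a smaller length. -/
def ndRes (K : Type u) [LinearOrder K] {Y : Type u} (p : Nd K Y) (c : K) (h : c ≤ p.1) :
    Nd K Y :=
  ⟨c, fun i => p.2 ⟨i.1, lt_of_lt_of_le i.2 h⟩⟩

/-- Restriction of a branch `x : K → Y` to length `b`. -/
def xRes (K : Type u) [LinearOrder K] {Y : Type u} (x : K → Y) (b : K) : Nd K Y :=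
  ⟨b, fun i => x i.1⟩

/-- `q` extends `p` as a sequence. -/
def NdExt (K : Type u) [LinearOrder K] {Y : Type u} (q p : Nd K Y) : Prop :=
  ∃ h : p.1 ≤ q.1, ∀ i : Set.Iio p.1, q.2 ⟨i.1, lt_of_lt_of_le i.2 h⟩ = p.2 i

/-- A subtree of `Y^{<K}`: a set of nodes closed under restriction. -/
def IsSubtree (K : Type u) [LinearOrder K] {Y : Type u} (T : Set (Nd K Y)) : Prop :=
  ∀ p ∈ T, ∀ c, ∀ h : c ≤ p.1, ndRes K p c h ∈ T

/-- The body `[T]`: the set of `K`-branches through `T`. -/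
def body (K : Type u) [LinearOrder K] {Y : Type u} (T : Set (Nd K Y)) : Set (K → Y) :=
  {x | ∀ b : K, xRes K x b ∈ T}

/-- `T` is pruned: every node is extended by a branch. -/
def Pruned (K : Type u) [LinearOrder K] {Y : Type u} (T : Set (Nd K Y)) : Prop :=
  ∀ p ∈ T, ∃ x ∈ body K T, NdExt K (xRes K x p.1) p

/-- `b` is a limit element: not least, and with no immediate predecessor. -/
def IsLimElt (K : Type u) [LinearOrder K] (b : K) : Prop :=
  (∃ c, c < b) ∧ ∀ c, c < b → ∃ d, c < d ∧ d < b

/-- Superclosed: closed under unions of increasing sequences of length `< K`. -/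
def Superclosed (K : Type u) [LinearOrder K] {Y : Type u} (T : Set (Nd K Y)) : Prop :=
  ∀ p : Nd K Y, IsLimElt K p.1 → (∀ c, ∀ h : c < p.1, ndRes K p c h.le ∈ T) → p ∈ T

/-- The values at position `p.1` realized by extensions of `p` in `T`, i.e. the
immediate successors of `p` in `T`. -/
def splitVals (K : Type u) [LinearOrder K] {Y : Type u} (T : Set (Nd K Y)) (p : Nd K Y) :
    Set Y :=
  {a | ∃ q ∈ T, ∃ h : p.1 < q.1,
    (∀ i : Set.Iio p.1, q.2 ⟨i.1, i.2.trans h⟩ = p.2 i) ∧ q.2 ⟨p.1, h⟩ = a}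

/-- A perfect tree: a nonempty superclosed subtree in which every node is
extended by a 2-splitting node. -/
def PerfectTree (K : Type u) [LinearOrder K] (T : Set (Nd K K)) : Prop :=
  T.Nonempty ∧ IsSubtree K T ∧ Superclosed K T ∧
    ∀ p ∈ T, ∃ q ∈ T, NdExt K q p ∧
      ∃ a ∈ splitVals K T q, ∃ a' ∈ splitVals K T q, a ≠ a'

/-- A κ-Miller tree: a nonempty superclosed subtree in which every node is
extended by a κ-splitting node. -/
def MillerTree (K : Type u) [LinearOrder K] (T : Set (Nd K K)) : Prop :=
  T.Nonempty ∧ IsSubtree K T ∧ Superclosed K T ∧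
    ∀ p ∈ T, ∃ q ∈ T, NdExt K q p ∧ #K ≤ #(splitVals K T q)

/-- A κ-tree: a subtree of height `K` all of whose levels have size `< #K`. -/
def KTree (K : Type u) [LinearOrder K] {Y : Type u} (T : Set (Nd K Y)) : Prop :=
  (∀ b : K, ∃ t : Set.Iio b → Y, (⟨b, t⟩ : Nd K Y) ∈ T) ∧
    ∀ b : K, #{t : Set.Iio b → Y | (⟨b, t⟩ : Nd K Y) ∈ T} < #K

/-- A κ-Aronszajn tree: a κ-tree with no branch. -/
def Aronszajn (K : Type u) [LinearOrder K] (S : Set (Nd K K)) : Prop :=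
  IsSubtree K S ∧ KTree K S ∧ body K S = ∅

/-- The tree property for `K`: every κ-tree has a branch. -/
def TreeProp (K : Type u) [LinearOrder K] : Prop :=
  ∀ T : Set (Nd K K), IsSubtree K T → KTree K T → (body K T).Nonempty

/-- weak compactness: inaccessibility together with the tree property. -/
def WComp (K : Type u) [LinearOrder K] : Prop :=
  (#K).IsInaccessible ∧ TreeProp K

/-- `C` is homeomorphic to the generalized Baire space `K → K`. -/
def HomeoToBaire (K : Type u) [LinearOrder K] (C : Set (K → K)) : Prop :=
  letI := bTop K K
  Nonempty (↥C ≃ₜ (K → K))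

/-- `C` is homeomorphic to the generalized Cantor space `K → ULift.{u} Bool`. -/
def HomeoToCantor (K : Type u) [LinearOrder K] (C : Set (K → K)) : Prop :=
  letI := bTop K K
  letI : TopologicalSpace (K → ULift.{u} Bool) := bTop K (ULift.{u} Bool)
  Nonempty (↥C ≃ₜ (K → ULift.{u} Bool))

/-- The Hurewicz dichotomy for `A`. -/
def HD (K : Type u) [LinearOrder K] (A : Set (K → K)) : Prop :=
  (∃ B, IsKK K B ∧ A ⊆ B) ∨
    ∃ C ⊆ A, IsClosed[bTop K K] C ∧ HomeoToBaire K C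

/-- The Miller-tree Hurewicz dichotomy for `A`. -/
def MillerHD (K : Type u) [LinearOrder K] (A : Set (K → K)) : Prop :=
  (∃ B, IsKK K B ∧ A ⊆ B) ∨ ∃ T, MillerTree K T ∧ body K T ⊆ A

/-- Σ¹₁ subsets of `K → K`: projections of closed subsets of the product. -/
def Sigma11 (K : Type u) [LinearOrder K] (A : Set (K → K)) : Prop :=
  letI := bTop K K
  ∃ C : Set ((K → K) × (K → K)), IsClosed C ∧ A = Prod.fst '' C

/-- The κ-perfect set property. -/
def PSP (K : Type u) [LinearOrder K] (A : Set (K → K)) : Prop :=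
  #A ≤ #K ∨ ∃ C ⊆ A, IsClosed[bTop K K] C ∧ HomeoToCantor K C

/-- `A ⊆ K → K` is bounded. -/
def BddSet (K : Type u) [LinearOrder K] (A : Set (K → K)) : Prop :=
  ∃ x : K → K, ∀ y ∈ A, ∀ i, y i ≤ x i

/-- `A ⊆ K → K` is eventually bounded. -/
def EvBddSet (K : Type u) [LinearOrder K] (A : Set (K → K)) : Prop :=
  ∃ x : K → K, ∀ y ∈ A, ∃ b : K, ∀ i, b ≤ i → y i ≤ x i

/-- Nodes of the product tree `K^{<K} × K^{<K}` (pairs of equal length). -/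
abbrev PNd (K : Type u) [LinearOrder K] := Σ b : K, (Set.Iio b → K) × (Set.Iio b → K)

/-- Subtree of the product tree: closed under simultaneous restriction. -/
def IsPSubtree (K : Type u) [LinearOrder K] (T : Set (PNd K)) : Prop :=
  ∀ p ∈ T, ∀ c, ∀ h : c ≤ p.1,
    (⟨c, fun i => p.2.1 ⟨i.1, lt_of_lt_of_le i.2 h⟩,
        fun i => p.2.2 ⟨i.1, lt_of_lt_of_le i.2 h⟩⟩ : PNd K) ∈ T

/-- The projection `p[T]` of the set of branches of a product tree to the first
coordinate. -/
def pProj (K : Type u) [LinearOrder K] (T : Set (PNd K)) : Set (K → K) :=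
  {x | ∃ y : K → K, ∀ b : K,
    (⟨b, fun i => x i.1, fun i => y i.1⟩ : PNd K) ∈ T}

/-- An `∃^x`-perfect embedding into a product tree `T`. -/
def PerfEmb (K : Type u) [LinearOrder K] (T : Set (PNd K)) (e : Nd K (ULift.{u} Bool) → PNd K) : Prop :=
  (∀ u, e u ∈ T) ∧
  (∀ u u' : Nd K (ULift.{u} Bool), ∀ h : u.1 < u'.1,
     (∀ i : Set.Iio u.1, u'.2 ⟨i.1, i.2.trans h⟩ = u.2 i) →
     ∃ h' : (e u).1 < (e u').1,
       (∀ i : Set.Iio (e u).1, (e u').2.1 ⟨i.1, i.2.trans h'⟩ = (e u).2.1 i) ∧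
       (∀ i : Set.Iio (e u).1, (e u').2.2 ⟨i.1, i.2.trans h'⟩ = (e u).2.2 i)) ∧
  (∀ u u' : Nd K (ULift.{u} Bool), ¬ NdExt K u u' → ¬ NdExt K u' u →
     ¬ NdExt K ⟨(e u).1, (e u).2.1⟩ ⟨(e u').1, (e u').2.1⟩ ∧
     ¬ NdExt K ⟨(e u').1, (e u').2.1⟩ ⟨(e u).1, (e u).2.1⟩) ∧
  (∀ u : Nd K (ULift.{u} Bool), IsLimElt K u.1 → ∀ d, d < (e u).1 →
     ∃ c, ∃ h : c < u.1, d < (e (ndRes K u c h.le)).1)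

/-- The immediate extension `u⌢⟨a⟩` of a node `u` by a value `a`. -/
def extNd (K : Type u) [LinearOrder K] [SuccOrder K] (u : Nd K K) (a : K) : Nd K K :=
  ⟨Order.succ u.1, fun i => if h : i.1 < u.1 then u.2 ⟨i.1, h⟩ else a⟩

/-- An `∃^x`-superperfect embedding into a product tree `T`. -/
def SuperPerfEmb (K : Type u) [LinearOrder K] [SuccOrder K] (T : Set (PNd K))
    (e : Nd K K → PNd K) : Prop :=
  (∀ u, e u ∈ T) ∧
  (∀ u u' : Nd K K, ∀ h : u.1 < u'.1,
     (∀ i : Set.Iio u.1, u'.2 ⟨i.1, i.2.trans h⟩ = u.2 i) →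
     ∃ h' : (e u).1 < (e u').1,
       (∀ i : Set.Iio (e u).1, (e u').2.1 ⟨i.1, i.2.trans h'⟩ = (e u).2.1 i) ∧
       (∀ i : Set.Iio (e u).1, (e u').2.2 ⟨i.1, i.2.trans h'⟩ = (e u).2.2 i)) ∧
  (∀ u : Nd K K, IsLimElt K u.1 → ∀ d, d < (e u).1 →
     ∃ c, ∃ h : c < u.1, d < (e (ndRes K u c h.le)).1) ∧
  (∀ u : Nd K K, ∃ γ : K, (e u).1 ≤ γ ∧
     ∃ hlen : ∀ a : K, γ < (e (extNd K u a)).1,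
       ∀ a b : K, a ≠ b →
         (∀ i : Set.Iio γ,
           (e (extNd K u a)).2.1 ⟨i.1, i.2.trans (hlen a)⟩ =
           (e (extNd K u b)).2.1 ⟨i.1, i.2.trans (hlen b)⟩) ∧
         (e (extNd K u a)).2.1 ⟨γ, hlen a⟩ ≠ (e (extNd K u b)).2.1 ⟨γ, hlen b⟩)



open Cardinal Set Topology Order
set_option linter.unusedSectionVars false


variable {K : Type u} [LinearOrder K]

section Basic
variable {Y : Type u}

lemma nd_ext {p q : Nd K Y} (h : p.1 = q.1)
    (h2 : ∀ (i : K) (hp : i < p.1) (hq : i < q.1), p.2 ⟨i, hp⟩ = q.2 ⟨i, hq⟩) : p = q := by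
  obtain ⟨b, f⟩ := p; obtain ⟨b', g⟩ := q
  dsimp at h; subst h
  exact congrArg (Sigma.mk b) (funext fun i => h2 i.1 i.2 i.2)

lemma ndext_intro {q p : Nd K Y} (hl : p.1 ≤ q.1)
    (hv : ∀ (i : K) (hip : i < p.1) (hiq : i < q.1), q.2 ⟨i, hiq⟩ = p.2 ⟨i, hip⟩) :
    NdExt K q p :=
  ⟨hl, fun i => hv i.1 i.2 _⟩

lemma ndext_val {q p : Nd K Y} (h : NdExt K q p) (i : K) (hip : i < p.1) (hiq : i < q.1) :
    q.2 ⟨i, hiq⟩ = p.2 ⟨i, hip⟩ := by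
  obtain ⟨hl, hv⟩ := h; exact hv ⟨i, hip⟩

lemma ndext_refl (p : Nd K Y) : NdExt K p p := ndext_intro le_rfl (fun _ _ _ => rfl)

lemma ndext_trans {r q p : Nd K Y} (h1 : NdExt K q p) (h2 : NdExt K r q) : NdExt K r p :=
  ndext_intro (h1.1.trans h2.1)
    (fun i hip hir => (ndext_val h2 i (lt_of_lt_of_le hip h1.1) hir).trans (ndext_val h1 i hip _))

lemma ndext_eq_of_len {q p : Nd K Y} (h : NdExt K q p) (hl : q.1 = p.1) : q = p :=
  nd_ext hl (fun i hq hp => ndext_val h i hp hq)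

@[simp] lemma ndRes_fst (p : Nd K Y) (c : K) (h : c ≤ p.1) : (ndRes K p c h).1 = c := rfl

lemma ndRes_self (p : Nd K Y) : ndRes K p p.1 le_rfl = p := nd_ext rfl (fun _ _ _ => rfl)

lemma ndext_ndRes (p : Nd K Y) (c : K) (h : c ≤ p.1) : NdExt K p (ndRes K p c h) :=
  ndext_intro h (fun _ _ _ => rfl)

lemma ndRes_ndRes (p : Nd K Y) (c : K) (h : c ≤ p.1) (c' : K) (h' : c' ≤ c) :
    ndRes K (ndRes K p c h) c' h' = ndRes K p c' (h'.trans h) :=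
  nd_ext rfl (fun _ _ _ => rfl)

lemma ndext_ndRes_of_ndext {q p : Nd K Y} (h : NdExt K q p) (c : K) (hc : c ≤ p.1) :
    NdExt K q (ndRes K p c hc) :=
  ndext_trans (ndext_ndRes p c hc) h

@[simp] lemma xRes_fst (x : K → Y) (b : K) : (xRes K x b).1 = b := rfl

lemma ndRes_xRes (x : K → Y) (b c : K) (h : c ≤ b) :
    ndRes K (xRes K x b) c h = xRes K x c := nd_ext rfl (fun _ _ _ => rfl)

lemma ndext_xRes (x : K → Y) {b b' : K} (h : b ≤ b') : NdExt K (xRes K x b') (xRes K x b) :=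
  ndext_intro h (fun _ _ _ => rfl)

end Basic

section Succ
variable [SuccOrder K] [NoMaxOrder K]

lemma extNd_fst (u : Nd K K) (a : K) : (extNd K u a).1 = Order.succ u.1 := rfl

lemma ndext_extNd (u : Nd K K) (a : K) : NdExt K (extNd K u a) u := by
  refine ndext_intro (Order.le_succ u.1) (fun i hip hiq => ?_)
  show dite _ _ _ = _
  rw [dif_pos hip]

lemma res_succ (u : Nd K K) (d : K) (hd : d < u.1) :
    ndRes K u (Order.succ d) (Order.succ_le_of_lt hd) =
      extNd K (ndRes K u d hd.le) (u.2 ⟨d, hd⟩) := by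
  refine nd_ext rfl (fun i hp hq => ?_)
  show _ = dite _ _ _
  split
  · rfl
  · next h =>
      have : i = d := le_antisymm (Order.lt_succ_iff.mp hp) (not_lt.mp h)
      subst this; rfl

lemma xRes_succ (z : K → K) (b : K) :
    xRes K z (Order.succ b) = extNd K (xRes K z b) (z b) := by
  refine nd_ext rfl (fun i hp hq => ?_)
  show _ = dite _ _ _
  split
  · rfl
  · next h =>
      have : i = b := le_antisymm (Order.lt_succ_iff.mp hp) (not_lt.mp h)
      subst this; rfl

lemma k_cases (d : K) : (∀ k, d ≤ k) ∨ (∃ c, c < d ∧ d = Order.succ c) ∨ IsLimElt K d := by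
  by_cases h1 : ∃ c, c < d
  · by_cases h2 : ∀ c, c < d → ∃ e, c < e ∧ e < d
    · exact Or.inr (Or.inr ⟨h1, h2⟩)
    · push_neg at h2
      obtain ⟨c, hc, h3⟩ := h2
      refine Or.inr (Or.inl ⟨c, hc, le_antisymm ?_ (Order.succ_le_of_lt hc)⟩)
      by_contra h4
      exact absurd (h3 (Order.succ c) (Order.lt_succ c)) (by simpa using lt_of_not_ge h4)
  · push_neg at h1
    exact Or.inl h1

end Succ

lemma nd_min_eq {m : K} (hm : ∀ k, m ≤ k) (p q : Nd K K) (hp : p.1 = m) (hq : q.1 = m) :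
    p = q := by
  refine nd_ext (hp.trans hq.symm) (fun i hip _ => ?_)
  exact absurd (hm i) (not_le.mpr (hp ▸ hip))

section Emb
variable [WellFoundedLT K] [SuccOrder K] [NoMaxOrder K]
variable {T : Set (PNd K)} {e : Nd K K → PNd K}

/-- first coordinate of the image node -/
def tfst (e : Nd K K → PNd K) (u : Nd K K) : Nd K K := ⟨(e u).1, (e u).2.1⟩

@[simp] lemma tfst_fst (u : Nd K K) : (tfst e u).1 = (e u).1 := rfl

lemma emono (he : SuperPerfEmb K T e) {u u' : Nd K K} (h : NdExt K u' u) :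
    (e u).1 ≤ (e u').1 ∧
    (∀ (i : K) (hi : i < (e u).1) (hi' : i < (e u').1),
      (e u').2.1 ⟨i, hi'⟩ = (e u).2.1 ⟨i, hi⟩) ∧
    (∀ (i : K) (hi : i < (e u).1) (hi' : i < (e u').1),
      (e u').2.2 ⟨i, hi'⟩ = (e u).2.2 ⟨i, hi⟩) := by
  rcases eq_or_lt_of_le h.1 with heq | hlt
  · have : u' = u := ndext_eq_of_len h heq.symm
    subst this
    exact ⟨le_rfl, fun i hi hi' => rfl, fun i hi hi' => rfl⟩
  · obtain ⟨h', a1, a2⟩ := he.2.1 u u' hlt (fun i => ndext_val h i.1 i.2 _)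
    exact ⟨h'.le, fun i hi hi' => a1 ⟨i, hi⟩, fun i hi hi' => a2 ⟨i, hi⟩⟩

lemma elen_mono (he : SuperPerfEmb K T e) {u u' : Nd K K} (h : NdExt K u' u)
    (hlt : u.1 < u'.1) : (e u).1 < (e u').1 :=
  (he.2.1 u u' hlt (fun i => ndext_val h i.1 i.2 _)).choose

lemma tmono (he : SuperPerfEmb K T e) {u u' : Nd K K} (h : NdExt K u' u) :
    NdExt K (tfst e u') (tfst e u) :=
  ndext_intro (emono he h).1 (fun i hi hi' => (emono he h).2.1 i hi hi')

lemma elen (he : SuperPerfEmb K T e) (u : Nd K K) : u.1 ≤ (e u).1 := by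
  have main : ∀ b : K, ∀ u : Nd K K, u.1 = b → b ≤ (e u).1 := by
    intro b
    induction b using WellFoundedLT.induction with
    | ind b ih =>
      intro u hu
      by_contra hcon
      push_neg at hcon
      have hd : (e u).1 < u.1 := hu ▸ hcon
      have h1 := ih (e u).1 hcon (ndRes K u (e u).1 hd.le) rfl
      have h2 : (e (ndRes K u (e u).1 hd.le)).1 < (e u).1 :=
        elen_mono he (ndext_ndRes u _ hd.le) hd
      exact absurd (h1.trans_lt h2) (lt_irrefl _)
  exact main u.1 u rfl

lemma eincomp (he : SuperPerfEmb K T e) {u u' : Nd K K}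
    (hu : ¬ NdExt K u u') (hu' : ¬ NdExt K u' u) :
    ∃ (γ : K) (h1 : γ < (e u).1) (h2 : γ < (e u').1),
      (e u).2.1 ⟨γ, h1⟩ ≠ (e u').2.1 ⟨γ, h2⟩ := by
  classical
  set Sd : Set K := {d | ∃ (h : d < u.1) (h' : d < u'.1), u.2 ⟨d, h⟩ ≠ u'.2 ⟨d, h'⟩} with hSd
  have hne : Sd.Nonempty := by
    by_contra hemp
    rw [Set.not_nonempty_iff_eq_empty] at hemp
    have hag : ∀ (i : K) (h : i < u.1) (h' : i < u'.1), u.2 ⟨i, h⟩ = u'.2 ⟨i, h'⟩ := by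
      intro i h h'
      by_contra hne2
      have : i ∈ Sd := ⟨h, h', hne2⟩
      rw [hemp] at this; exact this
    rcases le_total u.1 u'.1 with hle | hle
    · exact hu' (ndext_intro hle (fun i hip hiq => (hag i hip hiq).symm))
    · exact hu (ndext_intro hle (fun i hip hiq => hag i hiq hip))
  set d₁ := (wellFounded_lt (α := K)).min Sd hne with hd₁
  obtain ⟨h, h', hnev⟩ := (wellFounded_lt (α := K)).min_mem Sd hne
  have hmin : ∀ i, i < d₁ → i ∉ Sd := fun i hi hmem =>
    (wellFounded_lt (α := K)).not_lt_min Sd hmem hi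
  have hweq : ndRes K u d₁ h.le = ndRes K u' d₁ h'.le := by
    refine nd_ext rfl (fun i hp hq => ?_)
    by_contra hne2
    exact hmin i hp ⟨lt_trans hp h, lt_trans hp h', hne2⟩
  -- splitting at w := u ↾ d₁
  obtain ⟨γ, hγ1, hγ2, hγ3⟩ := he.2.2.2 (ndRes K u d₁ h.le)
  have hru : ndRes K u (Order.succ d₁) (Order.succ_le_of_lt h) =
      extNd K (ndRes K u d₁ h.le) (u.2 ⟨d₁, h⟩) := res_succ u d₁ h
  have hru' : ndRes K u' (Order.succ d₁) (Order.succ_le_of_lt h') =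
      extNd K (ndRes K u d₁ h.le) (u'.2 ⟨d₁, h'⟩) := hweq ▸ res_succ u' d₁ h'
  have hextu : NdExt K u (extNd K (ndRes K u d₁ h.le) (u.2 ⟨d₁, h⟩)) := by
    rw [← hru]; exact ndext_ndRes u _ _
  have hextu' : NdExt K u' (extNd K (ndRes K u d₁ h.le) (u'.2 ⟨d₁, h'⟩)) := by
    rw [← hru']; exact ndext_ndRes u' _ _
  have hd := hγ3 (u.2 ⟨d₁, h⟩) (u'.2 ⟨d₁, h'⟩) hnev
  have hγu : γ < (e u).1 := lt_of_lt_of_le (hγ2 _) (emono he hextu).1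
  have hγu' : γ < (e u').1 := lt_of_lt_of_le (hγ2 _) (emono he hextu').1
  refine ⟨γ, hγu, hγu', ?_⟩
  rw [(emono he hextu).2.1 γ (hγ2 _) hγu, (emono he hextu').2.1 γ (hγ2 _) hγu']
  exact hd.2

lemma ecomp (he : SuperPerfEmb K T e) {u u' : Nd K K}
    (h : NdExt K (tfst e u') (tfst e u)) : NdExt K u' u ∨ NdExt K u u' := by
  by_contra hc
  push_neg at hc
  obtain ⟨γ, h1, h2, hne⟩ := eincomp he hc.2 hc.1
  exact hne (ndext_val h γ h1 h2).symm

/-- comparable nodes give agreement of first coordinates where both defined -/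
lemma agree1 (he : SuperPerfEmb K T e) {u u' : Nd K K}
    (h : NdExt K u' u ∨ NdExt K u u') (i : K) (hi : i < (e u).1) (hi' : i < (e u').1) :
    (e u).2.1 ⟨i, hi⟩ = (e u').2.1 ⟨i, hi'⟩ := by
  rcases h with h | h
  · exact ((emono he h).2.1 i hi hi').symm
  · exact (emono he h).2.1 i hi' hi

lemma agree2 (he : SuperPerfEmb K T e) {u u' : Nd K K}
    (h : NdExt K u' u ∨ NdExt K u u') (i : K) (hi : i < (e u).1) (hi' : i < (e u').1) :
    (e u).2.2 ⟨i, hi⟩ = (e u').2.2 ⟨i, hi'⟩ := by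
  rcases h with h | h
  · exact ((emono he h).2.2 i hi hi').symm
  · exact (emono he h).2.2 i hi' hi

end Emb

section Basic2
variable {Y : Type u}

lemma chain_val {w w' : Nd K Y} (h : NdExt K w' w ∨ NdExt K w w') (i : K)
    (hi : i < w.1) (hi' : i < w'.1) : w.2 ⟨i, hi⟩ = w'.2 ⟨i, hi'⟩ := by
  rcases h with h | h
  · exact (ndext_val h i hi hi').symm
  · exact ndext_val h i hi' hi

lemma chain_union [WellFoundedLT K] (D : Set (Nd K Y))
    (hch : ∀ w ∈ D, ∀ w' ∈ D, NdExt K w' w ∨ NdExt K w w')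
    (b : K) (hb : ∀ w ∈ D, w.1 ≤ b) :
    ∃ w1 : Nd K Y, ∀ w ∈ D, NdExt K w1 w := by
  classical
  have hUB : {d : K | ∀ w ∈ D, w.1 ≤ d}.Nonempty := ⟨b, hb⟩
  set UB := {d : K | ∀ w ∈ D, w.1 ≤ d} with hUBdef
  set δ := (wellFounded_lt (α := K)).min UB hUB with hδdef
  have hδ : δ ∈ UB := (wellFounded_lt (α := K)).min_mem UB hUB
  have hδm : ∀ i, i < δ → i ∉ UB := fun i hi hmem =>
    (wellFounded_lt (α := K)).not_lt_min UB hmem hi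
  have hex : ∀ i : Set.Iio δ, ∃ w, w ∈ D ∧ i.1 < w.1 := by
    intro i
    have := hδm i.1 i.2
    simp only [hUBdef, Set.mem_setOf_eq, not_forall, not_le] at this
    obtain ⟨w, hw, hlt⟩ := this
    exact ⟨w, hw, hlt⟩
  choose g hg1 hg2 using hex
  refine ⟨⟨δ, fun i => (g i).2 ⟨i.1, hg2 i⟩⟩, fun w hw => ?_⟩
  refine ndext_intro (hδ w hw) (fun i hip hiq => ?_)
  exact (chain_val (hch w hw (g ⟨i, hiq⟩) (hg1 ⟨i, hiq⟩)) i hip (hg2 ⟨i, hiq⟩)).symm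

end Basic2

section Emb2
variable [WellFoundedLT K] [SuccOrder K] [NoMaxOrder K]
variable {T : Set (PNd K)} {e : Nd K K → PNd K}

lemma no_strict (he : SuperPerfEmb K T e) {w w' : Nd K K} {a : K} {q : Nd K K}
    (hext : NdExt K (tfst e (extNd K w a)) q)
    (hq' : ∀ (i : K) (h1 : i < (e w').1) (h2 : i < q.1), (e w').2.1 ⟨i, h1⟩ = q.2 ⟨i, h2⟩)
    (hlw' : (e w').1 < q.1) (hlwa : q.1 ≤ (e (extNd K w a)).1)
    (hst : NdExt K w' w) (hlt : w.1 < w'.1) : False := by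
  have h1 : NdExt K (tfst e (extNd K w a)) (tfst e w') := by
    refine ndext_intro (le_of_lt (lt_of_lt_of_le hlw' hlwa)) (fun i hip hiq => ?_)
    have hiq' : i < q.1 := lt_trans hip hlw'
    exact (ndext_val hext i hiq' hiq).trans (hq' i hip hiq').symm
  rcases ecomp he h1 with h2 | h2
  · -- extNd w a extends w'
    have hle : w'.1 ≤ (extNd K w a).1 := h2.1
    have heq : w'.1 = (extNd K w a).1 :=
      le_antisymm hle (Order.succ_le_of_lt hlt)
    have : extNd K w a = w' := ndext_eq_of_len h2 heq.symm
    rw [← this] at hlw'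
    exact absurd hlwa (not_le.mpr hlw')
  · -- w' extends extNd w a
    have := (emono he h2).1
    exact absurd (hlwa.trans this) (not_le.mpr hlw')

lemma stepA (he : SuperPerfEmb K T e) (m : K) (hm : ∀ k, m ≤ k)
    {q : Nd K K} {c : K} (hqc : q.1 = c)
    {u : Nd K K} (hu : NdExt K (tfst e u) q)
    {c₀ : K} (hc₀ : c₀ < c)
    (hroot : (e (⟨m, fun i => i.1⟩ : Nd K K)).1 < c₀)
    (hbd : ∀ (d : K) (hd : d ≤ u.1), (e (ndRes K u d hd)).1 < c →
      (e (ndRes K u d hd)).1 < c₀) :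
    ∃ (w : Nd K K) (a : K), (e w).1 < c₀ ∧
      (∀ (i : K) (h1 : i < (e w).1) (h2 : i < q.1), (e w).2.1 ⟨i, h1⟩ = q.2 ⟨i, h2⟩) ∧
      c ≤ (e (extNd K w a)).1 ∧ NdExt K (tfst e (extNd K w a)) q := by
  classical
  have hcu : c ≤ (e u).1 := hqc ▸ hu.1
  have hFne : {d : K | ∃ hd : d ≤ u.1, c ≤ (e (ndRes K u d hd)).1}.Nonempty :=
    ⟨u.1, le_rfl, by rw [ndRes_self]; exact hcu⟩
  set F := {d : K | ∃ hd : d ≤ u.1, c ≤ (e (ndRes K u d hd)).1} with hFdef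
  obtain ⟨d₀, hd₀F, hd₀min⟩ := (wellFounded_lt (α := K)).has_min F hFne
  obtain ⟨hd₀u, hd₀c⟩ := hd₀F
  have hlt : ∀ (d : K) (hd : d ≤ u.1), d < d₀ → (e (ndRes K u d hd)).1 < c := by
    intro d hd hdlt
    by_contra hcon
    exact hd₀min d ⟨hd, not_lt.mp hcon⟩ hdlt
  -- agreement of restrictions of u with q
  have hagq : ∀ (d : K) (hd : d ≤ u.1) (i : K) (h1 : i < (e (ndRes K u d hd)).1)
      (h2 : i < q.1), (e (ndRes K u d hd)).2.1 ⟨i, h1⟩ = q.2 ⟨i, h2⟩ := by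
    intro d hd i h1 h2
    have hiu : i < (e u).1 := lt_of_lt_of_le (hqc ▸ h2) hcu
    have ha := agree1 he (Or.inl (ndext_ndRes u d hd)) i h1 hiu
    exact ha.trans (ndext_val hu i h2 hiu)
  rcases k_cases d₀ with hmin | ⟨d₁, hd₁lt, heq⟩ | hlim
  · -- d₀ is the minimum: contradiction with root bound
    exfalso
    have hd₀m : d₀ = m := le_antisymm (hmin m) (hm d₀)
    have : ndRes K u d₀ hd₀u = (⟨m, fun i => i.1⟩ : Nd K K) :=
      nd_min_eq hm _ _ hd₀m rfl
    rw [this] at hd₀c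
    exact absurd (hd₀c.trans_lt hroot) (not_lt.mpr hc₀.le)
  · -- successor case
    subst heq
    have hd₁ltu : d₁ < u.1 := lt_of_lt_of_le (Order.lt_succ d₁) hd₀u
    set w := ndRes K u d₁ hd₁ltu.le with hwdef
    set a := u.2 ⟨d₁, hd₁ltu⟩ with hadef
    have hkey : ndRes K u (Order.succ d₁) hd₀u = extNd K w a := res_succ u d₁ hd₁ltu
    have hwc : (e w).1 < c := hlt d₁ hd₁ltu.le (Order.lt_succ d₁)
    have hlen : c ≤ (e (extNd K w a)).1 := by rw [← hkey]; exact hd₀c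
    have huext : NdExt K u (extNd K w a) := by
      rw [← hkey]; exact ndext_ndRes u _ _
    refine ⟨w, a, hbd d₁ hd₁ltu.le hwc, hagq d₁ hd₁ltu.le, hlen, ?_⟩
    refine ndext_intro (hqc ▸ hlen) (fun i h2 hi => ?_)
    have := hagq (Order.succ d₁) hd₀u
    rw [hkey] at this
    exact this i hi h2
  · -- limit case: contradiction via continuity
    exfalso
    have hlimnode : IsLimElt K (ndRes K u d₀ hd₀u).1 := hlim
    have hc₀lt : c₀ < (e (ndRes K u d₀ hd₀u)).1 := lt_of_lt_of_le hc₀ hd₀c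
    obtain ⟨c', hc', hgt⟩ := he.2.2.1 (ndRes K u d₀ hd₀u) hlimnode c₀ hc₀lt
    change c₀ < (e (ndRes K u c' (hc'.le.trans hd₀u))).1 at hgt
    have := hbd c' (hc'.le.trans hd₀u) (hlt c' _ hc')
    exact absurd hgt (not_lt.mpr this.le)

end Emb2

/-- the tree of initial segments of first coordinates of images of `e` -/
def sperf (e : Nd K K → PNd K) [SuccOrder K] : Set (Nd K K) :=
  {p | ∃ u, NdExt K (tfst e u) p}

section Emb3
variable [WellFoundedLT K] [SuccOrder K] [NoMaxOrder K]
variable {T : Set (PNd K)} {e : Nd K K → PNd K}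

lemma sperf_subtree : IsSubtree K (sperf e) := by
  rintro p ⟨u, hu⟩ c hc
  exact ⟨u, ndext_ndRes_of_ndext hu c hc⟩

lemma sperf_superclosed (he : SuperPerfEmb K T e) (m : K) (hm : ∀ k, m ≤ k) :
    Superclosed K (sperf e) := by
  classical
  intro p hlim hres
  have hbetween : ∀ b : K, b < p.1 → ∃ c, b < c ∧ c < p.1 := hlim.2
  set r : Nd K K := ⟨m, fun i => i.1⟩ with hrdef
  have hrext : ∀ u : Nd K K, NdExt K u r :=
    fun u => ndext_intro (hm _) (fun i hip _ => absurd (hm i) (not_le.mpr hip))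
  by_cases hcase0 : p.1 ≤ (e r).1
  · refine ⟨r, ndext_intro hcase0 (fun i hip hiq => ?_)⟩
    obtain ⟨c, hic, hclam⟩ := hbetween i hip
    obtain ⟨u, hu⟩ := hres c hclam
    have hiu : i < (e u).1 := lt_of_lt_of_le hic hu.1
    have h1 : (e r).2.1 ⟨i, hiq⟩ = (e u).2.1 ⟨i, hiu⟩ :=
      agree1 he (Or.inl (hrext u)) i hiq hiu
    have h2 := ndext_val hu i hic hiu
    exact h1.trans h2
  push_neg at hcase0
  -- the chain of nodes whose image is an initial segment of p
  set D : Set (Nd K K) := {w | NdExt K p (tfst e w)} with hDdef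
  have hDlen : ∀ w ∈ D, (e w).1 ≤ p.1 := fun w hw => hw.1
  have hDval : ∀ w ∈ D, ∀ (i : K) (h1 : i < (e w).1) (h2 : i < p.1),
      (e w).2.1 ⟨i, h1⟩ = p.2 ⟨i, h2⟩ := by
    intro w hw i h1 h2
    exact (ndext_val hw i h1 h2).symm
  have hchain : ∀ w ∈ D, ∀ w' ∈ D, NdExt K w' w ∨ NdExt K w w' := by
    intro w hw w' hw'
    rcases le_total (e w).1 (e w').1 with h | h
    · refine ecomp he (u := w) (u' := w') (ndext_intro h (fun i h1 h2 => ?_))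
      exact (hDval w' hw' i h2 (lt_of_lt_of_le h1 (hDlen w hw))).trans
        (hDval w hw i h1 (lt_of_lt_of_le h1 (hDlen w hw))).symm
    · refine (ecomp he (u := w') (u' := w) (ndext_intro h (fun i h1 h2 => ?_))).symm
      exact (hDval w hw i h2 (lt_of_lt_of_le h1 (hDlen w' hw'))).trans
        (hDval w' hw' i h1 (lt_of_lt_of_le h1 (hDlen w' hw'))).symm
  have hrD : r ∈ D := by
    refine ndext_intro hcase0.le (fun i hre hplt => ?_)
    obtain ⟨c, hic, hclam⟩ := hbetween (e r).1 hcase0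
    obtain ⟨u, hu⟩ := hres c hclam
    have hiu : i < (e u).1 := lt_of_lt_of_le (lt_trans hre hic) hu.1
    have A1 := agree1 he (Or.inl (hrext u)) i hre hiu
    have B1 := ndext_val hu i (lt_trans hre hic) hiu
    exact (A1.trans B1).symm
  by_cases hcof : ∀ c, c < p.1 → ∃ w ∈ D, c ≤ (e w).1
  · -- cofinal case: take the union of the chain
    have hbl : ∀ w ∈ D, w.1 ≤ p.1 := fun w hw => (elen he w).trans (hDlen w hw)
    obtain ⟨w1, hw1⟩ := chain_union D hchain p.1 hbl
    have himg : ∀ w ∈ D, NdExt K (tfst e w1) (tfst e w) := fun w hw => tmono he (hw1 w hw)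
    have hl : p.1 ≤ (e w1).1 := by
      by_contra hcon
      push_neg at hcon
      obtain ⟨c, h1, h2⟩ := hbetween _ hcon
      obtain ⟨w, hw, hcw⟩ := hcof c h2
      exact absurd (hcw.trans (himg w hw).1) (not_le.mpr h1)
    refine ⟨w1, ndext_intro hl (fun i hip hiq => ?_)⟩
    obtain ⟨c, h1, h2⟩ := hbetween i hip
    obtain ⟨w, hw, hcw⟩ := hcof c h2
    have hi_w : i < (e w).1 := lt_of_lt_of_le h1 hcw
    exact (ndext_val (himg w hw) i hi_w hiq).trans (hDval w hw i hi_w hip)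
  · -- bounded case
    push_neg at hcof
    obtain ⟨c₀, hc₀lam, hc₀⟩ := hcof
    have hrc₀ : (e r).1 < c₀ := hc₀ r hrD
    have hdata : ∀ (c : K), c₀ < c → ∀ (hclam : c < p.1),
        ∃ w, w ∈ D ∧ (e w).1 < c₀ ∧ ∃ a, c ≤ (e (extNd K w a)).1 ∧
          NdExt K (tfst e (extNd K w a)) (ndRes K p c hclam.le) := by
      intro c hc hclam
      obtain ⟨u, hu⟩ := hres c hclam
      have hbd : ∀ (d : K) (hd : d ≤ u.1), (e (ndRes K u d hd)).1 < c →
          (e (ndRes K u d hd)).1 < c₀ := by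
        intro d hd hltc
        refine hc₀ _ ?_
        refine ndext_intro (hltc.le.trans hclam.le) (fun i h1 h2 => ?_)
        have hiu : i < (e u).1 := lt_of_lt_of_le (lt_trans h1 hltc) hu.1
        have ha := agree1 he (Or.inl (ndext_ndRes u d hd)) i h1 hiu
        exact ((ha.trans (ndext_val hu i (lt_trans h1 hltc) hiu))).symm
      obtain ⟨w, a, hwc₀, hwagree, hlen, hext⟩ :=
        stepA he m hm (rfl : (ndRes K p c hclam.le).1 = c) hu hc hrc₀ hbd
      refine ⟨w, ?_, hwc₀, a, hlen, hext⟩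
      refine ndext_intro ((lt_trans hwc₀ (lt_trans hc hclam)).le) (fun i hip hiq => ?_)
      have hic : i < c := lt_trans (lt_trans hip hwc₀) hc
      exact (hwagree i hip hic).symm
    choose W hWD hWbd A hWlen hWext using hdata
    -- the w's are all equal
    have hWeq : ∀ (c : K) (hc : c₀ < c) (hclam : c < p.1) (c' : K) (hc' : c₀ < c')
        (hclam' : c' < p.1), W c hc hclam = W c' hc' hclam' := by
      have key : ∀ (c : K) (hc : c₀ < c) (hclam : c < p.1) (c' : K) (hc' : c₀ < c')
          (hclam' : c' < p.1), ¬ ((W c hc hclam).1 < (W c' hc' hclam').1 ∧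
            NdExt K (W c' hc' hclam') (W c hc hclam)) := by
        rintro c hc hclam c' hc' hclam' ⟨hltw, hst⟩
        refine no_strict he (hWext c hc hclam) (fun i h1 h2 => ?_) ?_
          (hWlen c hc hclam) hst hltw
        · -- agreement of W c' with ndRes p c
          have h2p : i < p.1 := lt_trans h2 hclam
          exact hDval _ (hWD c' hc' hclam') i h1 h2p
        · -- (e (W c')).1 < c
          calc (e (W c' hc' hclam')).1 < c₀ := hWbd c' hc' hclam'
          _ < c := hc
      intro c hc hclam c' hc' hclam'
      rcases hchain _ (hWD c hc hclam) _ (hWD c' hc' hclam') with h | h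
      · rcases eq_or_lt_of_le h.1 with heq | hltw
        · exact (ndext_eq_of_len h heq.symm).symm
        · exact absurd ⟨hltw, h⟩ (key c hc hclam c' hc' hclam')
      · rcases eq_or_lt_of_le h.1 with heq | hltw
        · exact ndext_eq_of_len h heq.symm
        · exact absurd ⟨hltw, h⟩ (key c' hc' hclam' c hc hclam)
    obtain ⟨cb, hcb, hcblam⟩ := hbetween c₀ hc₀lam
    set ws := W cb hcb hcblam with hwsdef
    obtain ⟨γ, hγ1, hγ2, hγ3⟩ := he.2.2.2 ws
    -- value of p at position i, computed through any admissible c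
    have hval : ∀ (c : K) (hc : c₀ < c) (hclam : c < p.1) (b : K), A c hc hclam = b →
        ∀ (i : K) (hic : i < c) (hilen : i < (e (extNd K ws b)).1),
        (e (extNd K ws b)).2.1 ⟨i, hilen⟩ = p.2 ⟨i, lt_trans hic hclam⟩ := by
      intro c hc hclam b hb
      subst hb
      intro i hic hilen
      have hW := hWeq c hc hclam cb hcb hcblam
      have hext := hWext c hc hclam
      rw [hW] at hext
      exact ndext_val hext i hic hilen
    by_cases hγlam : p.1 ≤ γ
    · -- γ is at least the length of p : all immediate extensions agree below p.1
      set a := A cb hcb hcblam with hadef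
      have hlen1 : p.1 ≤ (e (extNd K ws a)).1 := hγlam.trans (hγ2 a).le
      refine ⟨extNd K ws a, ndext_intro hlen1 (fun i hip hiq => ?_)⟩
      obtain ⟨c, h1, h2⟩ := hbetween (max i c₀) (max_lt hip hc₀lam)
      have hic : i < c := lt_of_le_of_lt (le_max_left _ _) h1
      have hcc₀ : c₀ < c := lt_of_le_of_lt (le_max_right _ _) h1
      by_cases hae : A c hcc₀ h2 = a
      · exact hval c hcc₀ h2 a hae i hic hiq
      · have hilen' : i < (e (extNd K ws (A c hcc₀ h2))).1 :=
          lt_trans (lt_of_lt_of_le hip hγlam) (hγ2 _)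
        have hv := hval c hcc₀ h2 _ rfl i hic hilen'
        have hag := (hγ3 a (A c hcc₀ h2) (fun hh => hae hh.symm)).1
          ⟨i, lt_of_lt_of_le hip hγlam⟩
        exact hag.trans hv
    · push_neg at hγlam
      obtain ⟨cg, hcg, hcglam⟩ := hbetween (max c₀ γ) (max_lt hc₀lam hγlam)
      have hcgc₀ : c₀ < cg := lt_of_le_of_lt (le_max_left _ _) hcg
      have hcgγ : γ < cg := lt_of_le_of_lt (le_max_right _ _) hcg
      set a := A cg hcgc₀ hcglam with hadef
      -- all choices above γ agree
      have haeq : ∀ (c : K) (hc : c₀ < c) (hclam : c < p.1), γ < c → A c hc hclam = a := by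
        intro c hc hclam hγc
        by_contra hne
        have hd := (hγ3 (A c hc hclam) a hne).2
        have h1 := hval c hc hclam _ rfl γ hγc (hγ2 _)
        have h2 := hval cg hcgc₀ hcglam _ rfl γ hcgγ (hγ2 _)
        exact hd (h1.trans h2.symm)
      have hlen1 : p.1 ≤ (e (extNd K ws a)).1 := by
        by_contra hcon
        push_neg at hcon
        obtain ⟨c, h1, h2⟩ := hbetween (max (max c₀ γ) (e (extNd K ws a)).1)
          (max_lt (max_lt hc₀lam hγlam) hcon)
        have hcc₀ : c₀ < c := lt_of_le_of_lt ((le_max_left _ _).trans (le_max_left _ _)) h1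
        have hcγ : γ < c := lt_of_le_of_lt ((le_max_right _ _).trans (le_max_left _ _)) h1
        have hce : (e (extNd K ws a)).1 < c := lt_of_le_of_lt (le_max_right _ _) h1
        have := hWlen c hcc₀ h2
        rw [hWeq c hcc₀ h2 cb hcb hcblam, haeq c hcc₀ h2 hcγ] at this
        exact absurd this (not_le.mpr hce)
      refine ⟨extNd K ws a, ndext_intro hlen1 (fun i hip hiq => ?_)⟩
      obtain ⟨c, h1, h2⟩ := hbetween (max (max i c₀) γ) (max_lt (max_lt hip hc₀lam) hγlam)
      have hic : i < c := lt_of_le_of_lt ((le_max_left _ _).trans (le_max_left _ _)) h1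
      have hcc₀ : c₀ < c := lt_of_le_of_lt ((le_max_right _ _).trans (le_max_left _ _)) h1
      have hcγ : γ < c := lt_of_le_of_lt (le_max_right _ _) h1
      exact hval c hcc₀ h2 a (haeq c hcc₀ h2 hcγ) i hic hiq

end Emb3

section Emb4
variable [WellFoundedLT K] [SuccOrder K] [NoMaxOrder K]
variable {T : Set (PNd K)} {e : Nd K K → PNd K}

lemma pnd_ext {b : K} {f1 f2 g1 g2 : Set.Iio b → K}
    (h1 : ∀ i, f1 i = g1 i) (h2 : ∀ i, f2 i = g2 i) :
    (⟨b, f1, f2⟩ : PNd K) = ⟨b, g1, g2⟩ := by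
  have e1 : f1 = g1 := funext h1
  have e2 : f2 = g2 := funext h2
  rw [e1, e2]

lemma sperf_splitting (he : SuperPerfEmb K T e) :
    ∀ p ∈ sperf e, ∃ q ∈ sperf e, NdExt K q p ∧ #K ≤ #(splitVals K (sperf e) q) := by
  rintro p ⟨u, hu⟩
  obtain ⟨γ, hγ1, hγ2, hγ3⟩ := he.2.2.2 u
  have hne : Nonempty K := ⟨p.1⟩
  obtain ⟨a₀⟩ := hne
  set q := ndRes K (tfst e (extNd K u a₀)) γ (hγ2 a₀).le with hqdef
  have hqS : q ∈ sperf e := ⟨extNd K u a₀, ndext_ndRes _ _ _⟩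
  have hqp : NdExt K q p := by
    refine ndext_intro (hu.1.trans hγ1) (fun i hip hiq => ?_)
    have hiu : i < (e u).1 := lt_of_lt_of_le hip hu.1
    have hiq' : i < (e (extNd K u a₀)).1 := lt_of_lt_of_le hiq (hγ2 a₀).le
    have A1 := agree1 he (Or.inl (ndext_extNd u a₀)) i hiu hiq'
    exact (A1.symm.trans (ndext_val hu i hip hiu) :
      (e (extNd K u a₀)).2.1 ⟨i, hiq'⟩ = p.2 ⟨i, hip⟩)
  have hmemsv : ∀ a : K, (e (extNd K u a)).2.1 ⟨γ, hγ2 a⟩ ∈ splitVals K (sperf e) q := by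
    intro a
    refine ⟨tfst e (extNd K u a), ⟨extNd K u a, ndext_refl _⟩, hγ2 a, fun i => ?_, rfl⟩
    -- (e (extNd u a)).2.1 ⟨i.1, _⟩ = q.2 i  for i : Iio q.1 (= Iio γ)
    by_cases hae : a = a₀
    · subst hae; rfl
    · exact (hγ3 a a₀ hae).1 ⟨i.1, i.2⟩
  have hinj : Function.Injective
      (fun a : K => (⟨(e (extNd K u a)).2.1 ⟨γ, hγ2 a⟩, hmemsv a⟩ :
        ↥(splitVals K (sperf e) q))) := by
    intro a b hab
    by_contra hne2
    exact (hγ3 a b hne2).2 (congrArg Subtype.val hab)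
  exact ⟨q, hqS, hqp, Cardinal.mk_le_of_injective hinj⟩

lemma sperf_body (he : SuperPerfEmb K T e) (hT : IsPSubtree K T) (m : K) (hm : ∀ k, m ≤ k) :
    body K (sperf e) ⊆ pProj K T := by
  classical
  intro x hx
  set r : Nd K K := ⟨m, fun i => i.1⟩ with hrdef
  have hrext : ∀ u : Nd K K, NdExt K u r :=
    fun u => ndext_intro (hm _) (fun i hip _ => absurd (hm i) (not_le.mpr hip))
  set D : Set (Nd K K) := {w | ∀ (i : K) (h1 : i < (e w).1), (e w).2.1 ⟨i, h1⟩ = x i}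
    with hDdef
  have hchain : ∀ w ∈ D, ∀ w' ∈ D, NdExt K w' w ∨ NdExt K w w' := by
    intro w hw w' hw'
    rcases le_total (e w).1 (e w').1 with h | h
    · exact ecomp he (ndext_intro h (fun i h1 h2 => (hw' i h2).trans (hw i h1).symm))
    · exact (ecomp he (ndext_intro h (fun i h1 h2 => (hw i h2).trans (hw' i h1).symm))).symm
  have hrD : r ∈ D := by
    intro i h1
    obtain ⟨c, hc⟩ := exists_gt (e r).1
    obtain ⟨u, hu⟩ := hx c
    have hiu : i < (e u).1 := lt_of_lt_of_le (lt_trans h1 hc) hu.1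
    have A1 := agree1 he (Or.inl (hrext u)) i h1 hiu
    exact A1.trans (ndext_val hu i (lt_trans h1 hc) hiu)
  have hub : ∀ c : K, ∃ w ∈ D, c ≤ (e w).1 := by
    by_contra hcon
    push_neg at hcon
    obtain ⟨c₀, hc₀⟩ := hcon
    have hrc₀ : (e r).1 < c₀ := hc₀ r hrD
    have hdata : ∀ (c : K), c₀ < c →
        ∃ w, w ∈ D ∧ (e w).1 < c₀ ∧ ∃ a, c ≤ (e (extNd K w a)).1 ∧
          NdExt K (tfst e (extNd K w a)) (xRes K x c) := by
      intro c hc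
      obtain ⟨u, hu⟩ := hx c
      have hbd : ∀ (d : K) (hd : d ≤ u.1), (e (ndRes K u d hd)).1 < c →
          (e (ndRes K u d hd)).1 < c₀ := by
        intro d hd hltc
        refine hc₀ _ (fun i h1 => ?_)
        have hiu : i < (e u).1 := lt_of_lt_of_le (lt_trans h1 hltc) hu.1
        have ha := agree1 he (Or.inl (ndext_ndRes u d hd)) i h1 hiu
        exact ha.trans (ndext_val hu i (lt_trans h1 hltc) hiu)
      obtain ⟨w, a, hwc₀, hwagree, hlen, hext⟩ :=
        stepA he m hm (rfl : (xRes K x c).1 = c) hu hc hrc₀ hbd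
      refine ⟨w, fun i h1 => ?_, hwc₀, a, hlen, hext⟩
      exact hwagree i h1 (lt_trans (lt_trans h1 hwc₀) hc)
    choose W hWD hWbd A hWlen hWext using hdata
    have hWeq : ∀ (c : K) (hc : c₀ < c) (c' : K) (hc' : c₀ < c'), W c hc = W c' hc' := by
      have key : ∀ (c : K) (hc : c₀ < c) (c' : K) (hc' : c₀ < c'),
          ¬ ((W c hc).1 < (W c' hc').1 ∧ NdExt K (W c' hc') (W c hc)) := by
        rintro c hc c' hc' ⟨hltw, hst⟩
        refine no_strict he (hWext c hc) (fun i h1 h2 => ?_) ?_ (hWlen c hc) hst hltw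
        · exact hWD c' hc' i h1
        · exact lt_trans (hWbd c' hc') hc
      intro c hc c' hc'
      rcases hchain _ (hWD c hc) _ (hWD c' hc') with h | h
      · rcases eq_or_lt_of_le h.1 with heq | hltw
        · exact (ndext_eq_of_len h heq.symm).symm
        · exact absurd ⟨hltw, h⟩ (key c hc c' hc')
      · rcases eq_or_lt_of_le h.1 with heq | hltw
        · exact ndext_eq_of_len h heq.symm
        · exact absurd ⟨hltw, h⟩ (key c' hc' c hc)
    obtain ⟨cb, hcb⟩ := exists_gt c₀
    set ws := W cb hcb with hwsdef
    obtain ⟨γ, hγ1, hγ2, hγ3⟩ := he.2.2.2 ws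
    have hval : ∀ (c : K) (hc : c₀ < c) (b : K), A c hc = b →
        ∀ (i : K) (hic : i < c) (hilen : i < (e (extNd K ws b)).1),
        (e (extNd K ws b)).2.1 ⟨i, hilen⟩ = x i := by
      intro c hc b hb; subst hb; intro i hic hilen
      have hext := hWext c hc
      rw [hWeq c hc cb hcb] at hext
      exact ndext_val hext i hic hilen
    obtain ⟨cg, hcg⟩ := exists_gt (max c₀ γ)
    have hcgc₀ : c₀ < cg := lt_of_le_of_lt (le_max_left _ _) hcg
    have hcgγ : γ < cg := lt_of_le_of_lt (le_max_right _ _) hcg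
    set a := A cg hcgc₀ with hadef
    have haeq : ∀ (c : K) (hc : c₀ < c), γ < c → A c hc = a := by
      intro c hc hγc
      by_contra hne
      exact (hγ3 (A c hc) a hne).2
        ((hval c hc _ rfl γ hγc (hγ2 _)).trans (hval cg hcgc₀ _ rfl γ hcgγ (hγ2 _)).symm)
    obtain ⟨c, hc1⟩ := exists_gt (max (max c₀ γ) (e (extNd K ws a)).1)
    have hcc₀ : c₀ < c := lt_of_le_of_lt ((le_max_left _ _).trans (le_max_left _ _)) hc1
    have hcγ : γ < c := lt_of_le_of_lt ((le_max_right _ _).trans (le_max_left _ _)) hc1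
    have hce : (e (extNd K ws a)).1 < c := lt_of_le_of_lt (le_max_right _ _) hc1
    have hfin := hWlen c hcc₀
    rw [hWeq c hcc₀ cb hcb, haeq c hcc₀ hcγ] at hfin
    exact absurd hfin (not_le.mpr hce)
  choose g hg1 hg2 using hub
  refine ⟨fun i => (e (g (Order.succ i))).2.2
    ⟨i, lt_of_lt_of_le (Order.lt_succ i) (hg2 (Order.succ i))⟩, fun b => ?_⟩
  have hmem := hT (e (g b)) (he.1 (g b)) b (hg2 b)
  have heq : (⟨b, fun i => x i.1, fun i => (e (g (Order.succ i.1))).2.2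
      ⟨i.1, lt_of_lt_of_le (Order.lt_succ i.1) (hg2 (Order.succ i.1))⟩⟩ : PNd K) =
      ⟨b, fun i => (e (g b)).2.1 ⟨i.1, lt_of_lt_of_le i.2 (hg2 b)⟩,
        fun i => (e (g b)).2.2 ⟨i.1, lt_of_lt_of_le i.2 (hg2 b)⟩⟩ := by
    refine pnd_ext (fun i => ?_) (fun i => ?_)
    · exact (hg1 b i.1 (lt_of_lt_of_le i.2 (hg2 b))).symm
    · exact agree2 he (hchain _ (hg1 (Order.succ i.1)) _ (hg1 b)) i.1
        (lt_of_lt_of_le (Order.lt_succ i.1) (hg2 (Order.succ i.1)))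
        (lt_of_lt_of_le i.2 (hg2 b))
  rw [heq]
  exact hmem

end Emb4

section Compact
variable [SuccOrder K] [NoMaxOrder K]

lemma kcompact_coord {A : Set (K → K)} (hA : KCompact K A) (j : K) :
    #((fun x : K → K => x j) '' A) < #K := by
  classical
  set U : K → Set (K → K) := fun a => {x | x j = a} with hU
  have hopen : ∀ V ∈ Set.range U, IsOpen[bTop K K] V := by
    rintro V ⟨a, rfl⟩
    letI := bTop K K
    have heq : U a = ⋃ s ∈ {s : K → K | s j = a},
        {x : K → K | ∀ i, i < Order.succ j → x i = s i} := by
      ext x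
      simp only [Set.mem_iUnion, Set.mem_setOf_eq, hU]
      constructor
      · intro hx
        exact ⟨x, hx, fun i _ => rfl⟩
      · rintro ⟨s, hs, hxs⟩
        rw [hxs j (Order.lt_succ j)]; exact hs
    rw [heq]
    exact isOpen_biUnion (fun s _ =>
      TopologicalSpace.isOpen_generateFrom_of_mem ⟨Order.succ j, s, rfl⟩)
  have hcov : A ⊆ ⋃₀ Set.range U := by
    intro x hx
    exact ⟨U (x j), ⟨x j, rfl⟩, rfl⟩
  obtain ⟨𝒱, h𝒱sub, h𝒱card, h𝒱cov⟩ := hA (Set.range U) hopen hcov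
  have hpick : ∀ v : ↥((fun x : K → K => x j) '' A), ∃ V, V ∈ 𝒱 ∧ ∃ a, V = U a ∧ a = v.1 := by
    rintro ⟨v, x, hxA, rfl⟩
    obtain ⟨V, hV, hxV⟩ := h𝒱cov hxA
    obtain ⟨a, rfl⟩ := h𝒱sub hV
    exact ⟨U a, hV, a, rfl, hxV.symm⟩
  choose V hV a hVa hav using hpick
  have hinj : Function.Injective (fun v => (⟨V v, hV v⟩ : ↥𝒱)) := by
    intro v v' h
    have h1 : V v = V v' := congrArg Subtype.val h
    have h2 : U (a v) = U (a v') := (hVa v).symm.trans (h1.trans (hVa v'))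
    have h3 : (fun _ : K => a v) ∈ U (a v) := rfl
    rw [h2] at h3
    have h4 : a v = a v' := h3
    exact Subtype.ext ((hav v).symm.trans (h4.trans (hav v')))
  exact lt_of_le_of_lt (Cardinal.mk_le_of_injective hinj) h𝒱card

end Compact

lemma zdiag_exists [WellFoundedLT K] (f : Nd K K → K) :
    ∃ z : K → K, ∀ b, z b = f (xRes K z b) := by
  refine ⟨(wellFounded_lt (α := K)).fix (fun b ih => f ⟨b, fun i => ih i.1 i.2⟩),
    fun b => ?_⟩
  exact WellFounded.fix_eq _ _ b

section Cast
variable [SuccOrder K]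

lemma ecast1 (e : Nd K K → PNd K) {u v : Nd K K} (h : u = v) (i : K) (hu : i < (e u).1) :
    (e u).2.1 ⟨i, hu⟩ = (e v).2.1 ⟨i, h ▸ hu⟩ := by subst h; rfl

end Cast

/-- If there is an `∃^x`-superperfect embedding into a product tree `T`, then
there is a κ-Miller tree `S` with `[S] ⊆ p[T]`; in particular `p[T]` is not
contained in any `K_κ` subset of `K → K`. -/
theorem superPerfEmb_miller_and_not_KK (K : Type u) [LinearOrder K]
    [WellFoundedLT K] [SuccOrder K] [NoMaxOrder K]
    (hseg : ∀ b : K, #(Set.Iio b) < #K)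
    (hunc : ℵ₀ < #K) (hpow : Cardinal.powerlt #K #K = #K)
    (T : Set (PNd K)) (hT : IsPSubtree K T)
    (e : Nd K K → PNd K) (he : SuperPerfEmb K T e) :
    (∃ S, MillerTree K S ∧ body K S ⊆ pProj K T) ∧
    ¬ ∃ B, IsKK K B ∧ pProj K T ⊆ B := by
  classical
  have hKne : Nonempty K := by
    rcases isEmpty_or_nonempty K with h | h
    · exact absurd (Cardinal.mk_eq_zero K ▸ hunc) (not_lt.mpr zero_le)
    · exact h
  obtain ⟨m, hm⟩ : ∃ m : K, ∀ k, m ≤ k := by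
    obtain ⟨m, -, hmin⟩ := (wellFounded_lt (α := K)).has_min Set.univ
      ⟨Classical.arbitrary K, trivial⟩
    exact ⟨m, fun k => not_lt.mp (hmin k trivial)⟩
  constructor
  · exact ⟨sperf e, ⟨⟨tfst e ⟨m, fun i => i.1⟩, ⟨m, fun i => i.1⟩, ndext_refl _⟩,
      sperf_subtree, sperf_superclosed he m hm, sperf_splitting he⟩,
      sperf_body he hT m hm⟩
  · rintro ⟨B, ⟨C, hC, rfl⟩, hBsub⟩
    choose γf hγ1 hγ2 hγ3 using he.2.2.2
    have hf : ∀ w : Nd K K, ∃ a : K,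
        (e (extNd K w a)).2.1 ⟨γf w, hγ2 w a⟩ ∉ (fun x : K → K => x (γf w)) '' C w.1 := by
      intro w
      by_contra hcon
      push_neg at hcon
      have hinj : Function.Injective (fun a : K =>
          (⟨(e (extNd K w a)).2.1 ⟨γf w, hγ2 w a⟩, hcon a⟩ :
            ↥((fun x : K → K => x (γf w)) '' C w.1))) := by
        intro a b hab
        by_contra hne
        exact (hγ3 w a b hne).2 (congrArg Subtype.val hab)
      exact absurd (Cardinal.mk_le_of_injective hinj)
        (not_le.mpr (kcompact_coord (hC w.1) (γf w)))
    choose f hfp using hf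
    obtain ⟨z, hzeq⟩ := zdiag_exists f
    have hxi : ∀ i : K, i < (e (xRes K z (Order.succ i))).1 := by
      intro i
      exact lt_of_lt_of_le (Order.lt_succ i) (elen he (xRes K z (Order.succ i)))
    set x : K → K := fun i => (e (xRes K z (Order.succ i))).2.1 ⟨i, hxi i⟩ with hxdef
    -- x is a branch of the superperfect tree
    have hxbody : x ∈ body K (sperf e) := by
      intro b
      refine ⟨xRes K z b, ndext_intro (elen he (xRes K z b)) (fun i hip hiq => ?_)⟩
      have hcmp : NdExt K (xRes K z (Order.succ i)) (xRes K z b) ∨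
          NdExt K (xRes K z b) (xRes K z (Order.succ i)) := by
        rcases le_total b (Order.succ i) with h | h
        · exact Or.inl (ndext_xRes z h)
        · exact Or.inr (ndext_xRes z h)
      exact (agree1 he hcmp i hiq (hxi i)).trans rfl
    have hxproj : x ∈ pProj K T := sperf_body he hT m hm hxbody
    obtain ⟨b, hb⟩ := Set.mem_iUnion.mp (hBsub hxproj)
    -- x avoids C b by construction
    have hstep : xRes K z (Order.succ b) = extNd K (xRes K z b) (f (xRes K z b)) := by
      have h0 := xRes_succ z b
      rw [hzeq b] at h0
      exact h0
    have hb2 : γf (xRes K z b) < (e (xRes K z (Order.succ b))).1 := by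
      rw [hstep]; exact hγ2 _ _
    have hxval : x (γf (xRes K z b)) =
        (e (extNd K (xRes K z b) (f (xRes K z b)))).2.1
          ⟨γf (xRes K z b), hγ2 _ _⟩ := by
      have hcmp : NdExt K (xRes K z (Order.succ b))
          (xRes K z (Order.succ (γf (xRes K z b)))) ∨
          NdExt K (xRes K z (Order.succ (γf (xRes K z b))))
          (xRes K z (Order.succ b)) := by
        rcases le_total (Order.succ (γf (xRes K z b))) (Order.succ b) with h | h
        · exact Or.inl (ndext_xRes z h)
        · exact Or.inr (ndext_xRes z h)
      have h1 : x (γf (xRes K z b)) =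
          (e (xRes K z (Order.succ b))).2.1 ⟨γf (xRes K z b), hb2⟩ :=
        agree1 he hcmp (γf (xRes K z b)) (hxi _) hb2
      rw [h1]
      exact ecast1 e hstep (γf (xRes K z b)) hb2
    have hmem : x (γf (xRes K z b)) ∈
        (fun y : K → K => y (γf (xRes K z b))) '' C (xRes K z b).1 := ⟨x, hb, rfl⟩
    rw [hxval] at hmem
    exact hfp (xRes K z b) hmem
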